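/- Let Φ be a locally finite set of points in ℝ² that is (σ,ρ,ν)-ring regulated about the origin, with every point of Φ at distance greater than r₀ from the origin, let ℓ be a path-loss function as in the context, γ₀ > 0 and m > 0. Then for every x ∈ Φ, the SIC decoding delay satisfies D(x, Φ) ≤ m / log₂(1 + η(‖x‖)), where η(r) = (γ₀/ℓ(r) + σ_β + ρ_β r + ν_β r²)^{−1}. -/

import Mathlib

open MeasureTheory Set

noncomputable section

abbrev Plane : Type := EuclideanSpace ℝ (Fin 2)

/-- `Φ` is `(σ,ρ,ν)`-ring regulated about the origin. -/
def RingRegulated (Φ : Set Plane) (σ ρ ν : ℝ) : Prop :=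
  ∀ r R : ℝ, 0 ≤ r → r < R →
    ((Φ ∩ {z : Plane | r < ‖z‖ ∧ ‖z‖ < R}).ncard : ℝ)
      ≤ σ + ρ * (R - r) + ν * (R ^ 2 - r ^ 2)

/-- The tail interference at the origin from points of `Φ` at distance greater than `r`. -/
def tailInterference (ℓ : ℝ → ℝ) (Φ : Set Plane) (r : ℝ) : ℝ :=
  ∑' w : {w : Plane // w ∈ Φ ∧ r < ‖w‖}, ℓ ‖(w : Plane)‖

/-- The signal-to-residual-interference-plus-noise ratio of the transmitter at `x`
with respect to the receiver at the origin, under successive interference cancellation. -/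
def SrINR (ℓ : ℝ → ℝ) (γ₀ : ℝ) (Φ : Set Plane) (x : Plane) : ℝ :=
  ℓ ‖x‖ / (tailInterference ℓ Φ ‖x‖ + γ₀)

/-- The deterministic lower bound `η(r)` on the SrINR at distance `r`. -/
def eta (ℓ : ℝ → ℝ) (γ₀ σβ ρβ νβ : ℝ) (r : ℝ) : ℝ :=
  (γ₀ / ℓ r + σβ + ρβ * r + νβ * r ^ 2)⁻¹

/-- The rate of the link from `x` to the typical receiver at the origin:
the infimum over the transmitters `w ∈ Φ` with `‖w‖ ≤ ‖x‖` of `log₂(1 + SrINR(w,Φ))`. -/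
def rate (ℓ : ℝ → ℝ) (γ₀ : ℝ) (Φ : Set Plane) (x : Plane) : ℝ :=
  sInf ((fun w => Real.logb 2 (1 + SrINR ℓ γ₀ Φ w)) '' {w ∈ Φ | ‖w‖ ≤ ‖x‖})

/-- The virtual decoding delay of a message of `m` bits from `x` to the typical receiver. -/
def vDelay (ℓ : ℝ → ℝ) (γ₀ m : ℝ) (Φ : Set Plane) (x : Plane) : ℝ :=
  m / rate ℓ γ₀ Φ x

/-- The SIC decoding delay from `x` to the typical receiver: the supremum of the virtual
decoding delays over the transmitters `w ∈ Φ` with higher received power, i.e. `‖w‖ ≤ ‖x‖`. -/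
def sicDelay (ℓ : ℝ → ℝ) (γ₀ m : ℝ) (Φ : Set Plane) (x : Plane) : ℝ :=
  sSup ((fun w => vDelay ℓ γ₀ m Φ w) '' {w ∈ Φ | ‖w‖ ≤ ‖x‖})

lemma listSum_eq (ℓ : ℝ → ℝ) (l : List ℝ) :
    (l.map ℓ).sum = ∑ i ∈ Finset.range l.length, ℓ (l.getD i 0) := by
  induction l with
  | nil => simp
  | cons a t ih =>
      rw [List.map_cons, List.sum_cons, List.length_cons, Finset.sum_range_succ', ih]
      simp only [List.getD_cons_succ, List.getD_cons_zero]
      ring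

lemma GInt (C β ρ ν a b : ℝ) (ha : 0 < a) (hab : a ≤ b) :
    IntervalIntegrable (fun t => C * t ^ (-β) * (ρ + 2*ν*t)) volume a b := by
  apply ContinuousOn.intervalIntegrable
  apply ContinuousOn.mul
  · apply ContinuousOn.mul continuousOn_const
    intro t ht
    rw [Set.uIcc_of_le hab] at ht
    have ht0 : t ≠ 0 := (lt_of_lt_of_le ha ht.1).ne'
    exact (Real.continuousAt_rpow_const t (-β) (Or.inl ht0)).continuousWithinAt
  · fun_prop

lemma lin_integral (ρ ν a b : ℝ) :
    ∫ t in a..b, (ρ + 2*ν*t) = ρ*(b-a) + ν*(b^2-a^2) := by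
  rw [intervalIntegral.integral_add intervalIntegrable_const
      ((by fun_prop : Continuous fun t : ℝ => 2*ν*t).intervalIntegrable _ _)]
  rw [intervalIntegral.integral_const, intervalIntegral.integral_const_mul]
  rw [integral_id, smul_eq_mul]
  ring

lemma key_step (ℓ : ℝ → ℝ) (C β ρ ν r₀ : ℝ) (hC : 0 ≤ C) (hρ : 0 ≤ ρ) (hν : 0 ≤ ν)
    (hβ0 : 0 ≤ β) (hr₀ : 0 < r₀)
    (hub : ∀ t, r₀ < t → ℓ t ≤ C * t ^ (-β))
    (a b : ℝ) (ha : r₀ < a) (hab : a ≤ b) :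
    (ρ*(b-a) + ν*(b^2-a^2)) * ℓ b ≤ ∫ t in a..b, C * t^(-β) * (ρ + 2*ν*t) := by
  have ha0 : 0 < a := hr₀.trans ha
  have hb : r₀ < b := lt_of_lt_of_le ha hab
  have h1 : (ρ*(b-a) + ν*(b^2-a^2)) * ℓ b = ∫ t in a..b, ℓ b * (ρ + 2*ν*t) := by
    rw [intervalIntegral.integral_const_mul, lin_integral]
    ring
  rw [h1]
  apply intervalIntegral.integral_mono_on hab
    ((by fun_prop : Continuous fun t : ℝ => ℓ b * (ρ + 2*ν*t)).intervalIntegrable _ _)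
    (GInt C β ρ ν a b ha0 hab)
  intro t ht
  have ht0 : 0 < t := lt_of_lt_of_le ha0 ht.1
  have hfac : 0 ≤ ρ + 2*ν*t := by nlinarith [ht0.le]
  have h2 : ℓ b ≤ C * t ^ (-β) := by
    refine (hub b hb).trans ?_
    exact mul_le_mul_of_nonneg_left
      (Real.rpow_le_rpow_of_nonpos ht0 ht.2 (neg_nonpos.2 (by linarith : (0:ℝ) ≤ β))) hC
  exact mul_le_mul_of_nonneg_right h2 hfac

lemma int_total (C β ρ ν : ℝ) (hC : 0 ≤ C) (hρ : 0 ≤ ρ) (hν : 0 ≤ ν) (hβ : 2 < β)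
    (r b : ℝ) (hr : 0 < r) (hrb : r ≤ b) :
    ∫ t in r..b, C * t^(-β) * (ρ + 2*ν*t)
      ≤ C*ρ*(r^(-β+1))/(β-1) + 2*C*ν*(r^(-β+2))/(β-2) := by
  have hb : 0 < b := hr.trans_le hrb
  have h0 : (0:ℝ) ∉ Set.uIcc r b := by
    rw [Set.uIcc_of_le hrb]
    rintro ⟨h1, -⟩
    exact absurd h1 (not_le.2 hr)
  have hcong : Set.EqOn (fun t => C * t^(-β) * (ρ + 2*ν*t))
      (fun t => (C*ρ) * t^(-β) + (2*C*ν) * t^(-β+1)) (Set.uIcc r b) := by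
    intro t ht
    have ht0 : t ≠ 0 := fun h => h0 (h ▸ ht)
    simp only
    rw [Real.rpow_add_one ht0 (-β)]
    ring
  rw [intervalIntegral.integral_congr hcong]
  have i1 : IntervalIntegrable (fun t : ℝ => (C*ρ) * t^(-β)) volume r b :=
    (intervalIntegral.intervalIntegrable_rpow (Or.inr h0)).const_mul _
  have i2 : IntervalIntegrable (fun t : ℝ => (2*C*ν) * t^(-β+1)) volume r b :=
    (intervalIntegral.intervalIntegrable_rpow (Or.inr h0)).const_mul _
  rw [intervalIntegral.integral_add i1 i2, intervalIntegral.integral_const_mul,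
    intervalIntegral.integral_const_mul,
    integral_rpow (Or.inr ⟨by intro h; linarith, h0⟩),
    integral_rpow (Or.inr ⟨by intro h; linarith, h0⟩)]
  have hexp : -β+1+1 = -β+2 := by ring
  rw [hexp]
  have e2 : 0 ≤ b ^ (-β+1) := (Real.rpow_pos_of_pos hb _).le
  have e2' : 0 ≤ b ^ (-β+2) := (Real.rpow_pos_of_pos hb _).le
  have e3 : 0 < β - 1 := by linarith
  have e4 : 0 < β - 2 := by linarith
  have k1 : C*ρ * ((b ^ (-β+1) - r ^ (-β+1)) / (-β+1)) ≤ C*ρ*(r^(-β+1))/(β-1) := by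
    have hrw : (b ^ (-β+1) - r ^ (-β+1)) / (-β+1) = (r ^ (-β+1) - b ^ (-β+1)) / (β-1) := by
      rw [div_eq_div_iff (by linarith : (-β+1 : ℝ) ≠ 0) e3.ne']
      ring
    rw [hrw, mul_div_assoc]
    exact mul_le_mul_of_nonneg_left
      ((div_le_div_iff_of_pos_right e3).2 (by linarith)) (mul_nonneg hC hρ)
  have k2 : (2*C*ν) * ((b ^ (-β+2) - r ^ (-β+2)) / (-β+2)) ≤ 2*C*ν*(r^(-β+2))/(β-2) := by
    have hrw : (b ^ (-β+2) - r ^ (-β+2)) / (-β+2) = (r ^ (-β+2) - b ^ (-β+2)) / (β-2) := by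
      rw [div_eq_div_iff (by linarith : (-β+2 : ℝ) ≠ 0) e4.ne']
      ring
    rw [hrw, mul_div_assoc]
    exact mul_le_mul_of_nonneg_left
      ((div_le_div_iff_of_pos_right e4).2 (by linarith))
      (by positivity)
  exact add_le_add k1 k2

lemma abel (ℓ : ℝ → ℝ) (C β σ ρ ν r₀ r : ℝ) (hC : 0 ≤ C) (hσ : 0 ≤ σ) (hρ : 0 ≤ ρ)
    (hν : 0 ≤ ν) (hβ0 : 0 ≤ β) (hr₀ : 0 < r₀) (hr : r₀ < r)
    (hℓ0 : ∀ t, 0 ≤ ℓ t) (hanti : AntitoneOn ℓ (Set.Ici 0))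
    (hub : ∀ t, r₀ < t → ℓ t ≤ C * t ^ (-β))
    (s : ℕ → ℝ) :
    ∀ N : ℕ, 0 < N → (∀ k < N, r < s k) →
      (∀ i j, i ≤ j → j < N → s i ≤ s j) →
      (∀ k < N, (k+1 : ℝ) ≤ σ + ρ*(s k - r) + ν*((s k)^2 - r^2)) →
      ∑ k ∈ Finset.range N, ℓ (s k)
        ≤ σ * ℓ r + (∫ t in r..(s (N-1)), C*t^(-β)*(ρ+2*ν*t))
          + ((N:ℝ) - (σ + ρ*(s (N-1) - r) + ν*((s (N-1))^2 - r^2))) * ℓ (s (N-1)) := by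
  have hr0 : 0 < r := hr₀.trans hr
  intro N
  induction N with
  | zero => intro h; exact absurd h (lt_irrefl 0)
  | succ n ih =>
      intro _ h1 h2 h3
      rcases Nat.eq_zero_or_pos n with hn | hn
      · -- base case N = 1
        subst hn
        have hs0 : r < s 0 := h1 0 (by norm_num)
        have hks := key_step ℓ C β ρ ν r₀ hC hρ hν hβ0 hr₀ hub r (s 0) hr hs0.le
        have hmono : ℓ (s 0) ≤ ℓ r :=
          hanti (Set.mem_Ici.2 hr0.le) (Set.mem_Ici.2 (hr0.trans hs0).le) hs0.le
        have hσm : σ * ℓ (s 0) ≤ σ * ℓ r := mul_le_mul_of_nonneg_left hmono hσ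
        simp only [Finset.sum_range_one, Nat.cast_one, Nat.zero_add, Nat.add_sub_cancel,
          Nat.cast_ofNat, Nat.cast_add, Nat.cast_zero]
        nlinarith [hks, hσm]
      · -- step
        have hkey : ∀ P : ℕ → Prop, (∀ k < n + 1, P k) → ∀ k < n, P k :=
          fun P h k hk => h k (hk.trans (Nat.lt_succ_self n))
        have IH := ih hn (fun k hk => h1 k (hk.trans (Nat.lt_succ_self n)))
          (fun i j hij hj => h2 i j hij (hj.trans (Nat.lt_succ_self n)))
          (fun k hk => h3 k (hk.trans (Nat.lt_succ_self n)))
        set a := s (n - 1) with ha_def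
        set b := s n with hb_def
        have hn1 : n - 1 < n := Nat.sub_lt hn (by norm_num)
        have hab : a ≤ b := h2 (n-1) n (Nat.sub_le n 1) (Nat.lt_succ_self n)
        have hra : r < a := h1 (n-1) (hn1.trans (Nat.lt_succ_self n))
        have hrb : r < b := h1 n (Nat.lt_succ_self n)
        have hsplit : (∫ t in r..a, C*t^(-β)*(ρ+2*ν*t)) + (∫ t in a..b, C*t^(-β)*(ρ+2*ν*t))
            = ∫ t in r..b, C*t^(-β)*(ρ+2*ν*t) :=
          intervalIntegral.integral_add_adjacent_intervals
            (GInt C β ρ ν r a hr0 hra.le) (GInt C β ρ ν a b (hr0.trans hra) hab)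
        have hks := key_step ℓ C β ρ ν r₀ hC hρ hν hβ0 hr₀ hub a b (hr.trans hra) hab
        have hmono : ℓ b ≤ ℓ a :=
          hanti (Set.mem_Ici.2 (hr0.trans hra).le) (Set.mem_Ici.2 ((hr0.trans hra).trans_le hab).le) hab
        have hcount : (n : ℝ) ≤ σ + ρ*(a - r) + ν*(a^2 - r^2) := by
          have := h3 (n-1) (hn1.trans (Nat.lt_succ_self n))
          have hc : ((n - 1 : ℕ) : ℝ) = (n : ℝ) - 1 := by
            rw [Nat.cast_sub hn]
            norm_num
          rw [hc] at this
          linarith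
        have hsum : ∑ k ∈ Finset.range (n+1), ℓ (s k)
            = (∑ k ∈ Finset.range n, ℓ (s k)) + ℓ b := Finset.sum_range_succ _ _
        rw [hsum]
        have hNsub : n + 1 - 1 = n := Nat.succ_sub_one n
        rw [hNsub]
        push_cast
        rw [← hsplit]
        have hlb : 0 ≤ ℓ b := hℓ0 b
        have hla : 0 ≤ ℓ a := hℓ0 a
        -- (n - F a) * ℓ a ≤ (n - F a) * ℓ b  since n - F a ≤ 0 and ℓ b ≤ ℓ a
        have hstep : ((n:ℝ) - (σ + ρ*(a - r) + ν*(a^2 - r^2))) * ℓ a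
            ≤ ((n:ℝ) - (σ + ρ*(a - r) + ν*(a^2 - r^2))) * ℓ b :=
          mul_le_mul_of_nonpos_left hmono (by linarith)
        nlinarith [IH, hks, hstep]

lemma core (Φ : Set Plane) (σ ρ ν : ℝ)
    (hσ : 0 ≤ σ) (hρ : 0 ≤ ρ) (hν : 0 ≤ ν)
    (hloc : ∀ R : ℝ, (Φ ∩ Metric.closedBall 0 R).Finite)
    (hreg : RingRegulated Φ σ ρ ν)
    (ℓ : ℝ → ℝ) (hℓ0 : ∀ t, 0 ≤ ℓ t)
    (hℓanti : AntitoneOn ℓ (Set.Ici 0))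
    (C C' r₀ β : ℝ) (hC' : 0 < C') (hCC' : C' ≤ C) (hr₀ : 0 < r₀) (hβ : 2 < β)
    (hℓlb : ∀ t, r₀ < t → C' * t ^ (-β) ≤ ℓ t)
    (hℓub : ∀ t, r₀ < t → ℓ t ≤ C * t ^ (-β))
    (r : ℝ) (hr : r₀ < r) :
    tailInterference ℓ Φ r
      ≤ ℓ r * (σ + (C/C')*(ρ/(β-1))*r + (C/C')*(2*ν/(β-2))*r^2) := by
  classical
  have hr0 : 0 < r := hr₀.trans hr
  have hβ0 : (0:ℝ) ≤ β := by linarith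
  have hC0 : 0 < C := lt_of_lt_of_le hC' hCC'
  have e3 : (0:ℝ) < β - 1 := by linarith
  have e4 : (0:ℝ) < β - 2 := by linarith
  have hℓr : 0 < ℓ r := lt_of_lt_of_le (by positivity) (hℓlb r hr)
  set Q : ℝ := σ + (C/C')*(ρ/(β-1))*r + (C/C')*(2*ν/(β-2))*r^2 with hQdef
  have hQ0 : 0 ≤ Q := by
    have t1 : 0 ≤ (C/C')*(ρ/(β-1))*r :=
      mul_nonneg (mul_nonneg (by positivity) (div_nonneg hρ e3.le)) hr0.le
    have t2 : 0 ≤ (C/C')*(2*ν/(β-2))*r^2 :=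
      mul_nonneg (mul_nonneg (by positivity) (div_nonneg (by linarith) e4.le)) (sq_nonneg r)
    rw [hQdef]; linarith
  have claim : ∀ S : Finset {w : Plane // w ∈ Φ ∧ r < ‖w‖},
      (∑ w ∈ S, ℓ ‖w.1‖) ≤ ℓ r * Q := by
    intro S
    rcases S.eq_empty_or_nonempty with hS | hS
    · rw [hS, Finset.sum_empty]
      exact mul_nonneg hℓr.le hQ0
    · set M : Multiset ℝ := S.val.map (fun w => ‖w.1‖) with hM
      set l : List ℝ := M.sort (· ≤ ·) with hl
      have hperm : (l : Multiset ℝ) = M := Multiset.sort_eq _ _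
      have hsorted : l.Pairwise (· ≤ ·) := Multiset.pairwise_sort _ _
      set N := l.length with hN
      have hNpos : 0 < N := by
        rw [hN, hl, Multiset.length_sort, hM, Multiset.card_map]
        exact Finset.card_pos.2 hS
      set s : ℕ → ℝ := fun k => l.getD k 0 with hs
      have hget : ∀ k (hk : k < N), s k = l[k] := fun k hk => List.getD_eq_getElem l 0 hk
      have hsum_eq : (∑ w ∈ S, ℓ ‖w.1‖) = ∑ k ∈ Finset.range N, ℓ (s k) := by
        rw [← listSum_eq]
        have e : ((l.map ℓ : List ℝ) : Multiset ℝ) = S.val.map (fun w => ℓ ‖w.1‖) := by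
          rw [← Multiset.map_coe, hperm, hM, Multiset.map_map]
          rfl
        have : (∑ w ∈ S, ℓ ‖w.1‖) = (S.val.map (fun w => ℓ ‖w.1‖)).sum := rfl
        rw [this, ← e, Multiset.sum_coe]
      have hmemM : ∀ k (hk : k < N), s k ∈ M := by
        intro k hk
        rw [← hperm]
        rw [hget k hk]
        exact_mod_cast List.getElem_mem hk
      have h1 : ∀ k < N, r < s k := by
        intro k hk
        rcases Multiset.mem_map.1 (hmemM k hk) with ⟨w, _, hwe⟩
        rw [← hwe]
        exact w.2.2
      have h2 : ∀ i j, i ≤ j → j < N → s i ≤ s j := by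
        intro i j hij hj
        rcases eq_or_lt_of_le hij with rfl | hlt
        · exact le_refl _
        · rw [hget i (hij.trans_lt hj), hget j hj]
          exact List.pairwise_iff_get.1 hsorted ⟨i, hij.trans_lt hj⟩ ⟨j, hj⟩ hlt
      have h3 : ∀ k < N, (k+1 : ℝ) ≤ σ + ρ*(s k - r) + ν*((s k)^2 - r^2) := by
        intro k hk
        set t := s k with ht
        have hrt : r < t := h1 k hk
        have hcard : k + 1 ≤ (S.filter (fun w => ‖w.1‖ ≤ t)).card := by
          have e1 : ((S.filter (fun w => ‖w.1‖ ≤ t)).card : ℕ)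
              = l.countP (fun x => decide (x ≤ t)) := by
            have : (S.filter (fun w => ‖w.1‖ ≤ t)).card
                = Multiset.card (S.val.filter (fun w => ‖w.1‖ ≤ t)) := rfl
            rw [this, ← Multiset.countP_map (fun w => ‖w.1‖) S.val (· ≤ t),
              ← hM, ← hperm, Multiset.coe_countP]
          rw [e1]
          have htake : (l.take (k+1)).countP (fun x => decide (x ≤ t)) = k+1 := by
            rw [List.countP_eq_length.2, List.length_take]
            · omega
            · intro a ha
              rcases List.mem_take_iff_getElem.1 ha with ⟨i, hi, rfl⟩
              have hik : i ≤ k := by omega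
              have hiN : i < N := by omega
              have : l[i] ≤ l[k] := by
                rcases eq_or_lt_of_le hik with h | h
                · subst h; exact le_refl _
                · exact List.pairwise_iff_get.1 hsorted ⟨i, hiN⟩ ⟨k, hk⟩ h
              simpa [ht, hget k hk] using this
          have happ := List.countP_append (p := fun x => decide (x ≤ t)) (l₁ := l.take (k+1)) (l₂ := l.drop (k+1))
          rw [List.take_append_drop] at happ
          omega
        have hsub : ∀ ε : ℝ, 0 < ε →
            (((S.filter (fun w => ‖w.1‖ ≤ t)).card : ℕ) : ℝ)
              ≤ σ + ρ*(t+ε-r) + ν*((t+ε)^2 - r^2) := by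
          intro ε hε
          set F2 : Finset Plane := (S.filter (fun w => ‖w.1‖ ≤ t)).image
            (fun w => w.1) with hF2
          have hcardF2 : F2.card = (S.filter (fun w => ‖w.1‖ ≤ t)).card :=
            Finset.card_image_of_injective _ (fun a b h => Subtype.ext h)
          have hsub2 : ↑F2 ⊆ Φ ∩ {z : Plane | r < ‖z‖ ∧ ‖z‖ < t + ε} := by
            intro z hz
            simp only [hF2, Finset.coe_image, Set.mem_image, Finset.mem_coe,
              Finset.mem_filter] at hz
            rcases hz with ⟨w, ⟨_, hwt⟩, rfl⟩
            exact ⟨w.2.1, w.2.2, lt_of_le_of_lt hwt (by linarith)⟩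
          have hfin : (Φ ∩ {z : Plane | r < ‖z‖ ∧ ‖z‖ < t+ε}).Finite :=
            (hloc (t+ε)).subset (by
              intro z hz
              exact ⟨hz.1, mem_closedBall_zero_iff.2 (le_of_lt hz.2.2)⟩)
          have hle := Set.ncard_le_ncard hsub2 hfin
          rw [Set.ncard_coe_finset, hcardF2] at hle
          have hb := hreg r (t+ε) hr0.le (by linarith)
          calc (((S.filter (fun w => ‖w.1‖ ≤ t)).card : ℕ) : ℝ)
              ≤ ((Φ ∩ {z : Plane | r < ‖z‖ ∧ ‖z‖ < t+ε}).ncard : ℝ) := Nat.cast_le.2 hle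
            _ ≤ σ + ρ*(t+ε-r) + ν*((t+ε)^2 - r^2) := by
                convert hb using 2 <;> ring
        have hlim : (((S.filter (fun w => ‖w.1‖ ≤ t)).card : ℕ) : ℝ)
            ≤ σ + ρ*(t-r) + ν*(t^2-r^2) := by
          have hc : Continuous (fun ε : ℝ => σ + ρ*(t+ε-r) + ν*((t+ε)^2 - r^2)) := by
            fun_prop
          have h00 : σ + ρ*(t+0-r) + ν*((t+0)^2-r^2) = σ + ρ*(t-r) + ν*(t^2-r^2) := by ring
          have htend : Filter.Tendsto (fun ε : ℝ => σ + ρ*(t+ε-r) + ν*((t+ε)^2-r^2))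
              (nhdsWithin 0 (Set.Ioi 0)) (nhds (σ + ρ*(t-r) + ν*(t^2-r^2))) := by
            rw [← h00]
            exact (hc.tendsto 0).mono_left nhdsWithin_le_nhds
          exact ge_of_tendsto htend (eventually_nhdsWithin_of_forall (fun ε hε => hsub ε hε))
        calc (k+1 : ℝ) ≤ (((S.filter (fun w => ‖w.1‖ ≤ t)).card : ℕ) : ℝ) := by
              exact_mod_cast hcard
          _ ≤ _ := hlim
      have habel := abel ℓ C β σ ρ ν r₀ r hC0.le hσ hρ hν hβ0 hr₀ hr hℓ0 hℓanti hℓub s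
        N hNpos h1 h2 h3
      rw [hsum_eq]
      refine le_trans habel ?_
      have hN1 : N - 1 < N := Nat.sub_lt hNpos one_pos
      have hbr : r < s (N-1) := h1 (N-1) hN1
      have hint := int_total C β ρ ν hC0.le hρ hν hβ r (s (N-1)) hr0 hbr.le
      have hlast : ((N:ℝ) - (σ + ρ*(s (N-1) - r) + ν*((s (N-1))^2 - r^2))) * ℓ (s (N-1)) ≤ 0 := by
        apply mul_nonpos_of_nonpos_of_nonneg _ (hℓ0 _)
        have hcnt := h3 (N-1) hN1
        have hc : ((N - 1:ℕ):ℝ) = (N:ℝ) - 1 := by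
          rw [Nat.cast_sub hNpos]; norm_num
        rw [hc] at hcnt
        linarith
      have hkey : C * r^(-β) ≤ (C/C') * ℓ r := by
        rw [div_mul_eq_mul_div, le_div_iff₀ hC']
        nlinarith [mul_le_mul_of_nonneg_left (hℓlb r hr) hC0.le]
      have hr1 : r ^ (-β+1) = r^(-β) * r := by
        rw [show (-β+1) = (-β)+1 by ring, Real.rpow_add_one hr0.ne']
      have hr2 : r ^ (-β+2) = r^(-β) * r^2 := by
        rw [show (-β+2) = (-β+1)+1 by ring, Real.rpow_add_one hr0.ne', hr1]
        ring
      have ht1 : C*ρ*(r^(-β+1))/(β-1) ≤ ℓ r * ((C/C')*(ρ/(β-1))*r) := by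
        have hmul : 0 ≤ ρ * r / (β-1) := div_nonneg (mul_nonneg hρ hr0.le) e3.le
        calc C*ρ*(r^(-β+1))/(β-1) = (C*r^(-β)) * (ρ*r/(β-1)) := by rw [hr1]; ring
          _ ≤ ((C/C')*ℓ r) * (ρ*r/(β-1)) := mul_le_mul_of_nonneg_right hkey hmul
          _ = ℓ r * ((C/C')*(ρ/(β-1))*r) := by ring
      have ht2 : 2*C*ν*(r^(-β+2))/(β-2) ≤ ℓ r * ((C/C')*(2*ν/(β-2))*r^2) := by
        have hmul : 0 ≤ 2*ν*r^2 / (β-2) := div_nonneg (by positivity) e4.le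
        calc 2*C*ν*(r^(-β+2))/(β-2) = (C*r^(-β)) * (2*ν*r^2/(β-2)) := by rw [hr2]; ring
          _ ≤ ((C/C')*ℓ r) * (2*ν*r^2/(β-2)) := mul_le_mul_of_nonneg_right hkey hmul
          _ = ℓ r * ((C/C')*(2*ν/(β-2))*r^2) := by ring
      have step1 : (σ * ℓ r + ∫ t in r..(s (N-1)), C*t^(-β)*(ρ+2*ν*t))
          + ((N:ℝ) - (σ + ρ*(s (N-1) - r) + ν*((s (N-1))^2 - r^2))) * ℓ (s (N-1))
          ≤ σ * ℓ r + (ℓ r*((C/C')*(ρ/(β-1))*r) + ℓ r*((C/C')*(2*ν/(β-2))*r^2)) + 0 :=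
        add_le_add (add_le_add le_rfl (hint.trans (add_le_add ht1 ht2))) hlast
      refine step1.trans (le_of_eq ?_)
      rw [hQdef]; ring
  by_cases hsum : Summable (fun w : {w : Plane // w ∈ Φ ∧ r < ‖w‖} => ℓ ‖w.1‖)
  · exact Summable.tsum_le_of_sum_le hsum claim
  · rw [tailInterference, tsum_eq_zero_of_not_summable hsum]
    exact mul_nonneg hℓr.le hQ0

theorem stmt5 (Φ : Set Plane) (σ ρ ν : ℝ)
    (hσ : 0 ≤ σ) (hρ : 0 ≤ ρ) (hν : 0 ≤ ν)
    (hloc : ∀ R : ℝ, (Φ ∩ Metric.closedBall 0 R).Finite)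
    (hreg : RingRegulated Φ σ ρ ν)
    (ℓ : ℝ → ℝ) (hℓ0 : ∀ r, 0 ≤ ℓ r)
    (hℓanti : AntitoneOn ℓ (Set.Ici 0))
    (hℓbdd : BddAbove (ℓ '' Set.Ici 0))
    (C C' r₀ β : ℝ) (hC' : 0 < C') (hCC' : C' ≤ C) (hr₀ : 0 < r₀) (hβ : 2 < β)
    (hℓlb : ∀ r, r₀ < r → C' * r ^ (-β) ≤ ℓ r)
    (hℓub : ∀ r, r₀ < r → ℓ r ≤ C * r ^ (-β))
    (hΦr₀ : ∀ w ∈ Φ, r₀ < ‖w‖)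
    (γ₀ : ℝ) (hγ₀ : 0 < γ₀) (m : ℝ) (hm : 0 < m) :
    ∀ x ∈ Φ,
      sicDelay ℓ γ₀ m Φ x
        ≤ m / Real.logb 2
            (1 + eta ℓ γ₀ σ ((C / C') * (ρ / (β - 1))) ((C / C') * (2 * ν / (β - 2))) ‖x‖) := by
  intro x hx
  have e3 : (0:ℝ) < β - 1 := by linarith
  have e4 : (0:ℝ) < β - 2 := by linarith
  have hC0 : 0 < C := lt_of_lt_of_le hC' hCC'
  set Qf : ℝ → ℝ := fun t => σ + (C/C')*(ρ/(β-1))*t + (C/C')*(2*ν/(β-2))*t^2 with hQf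
  have hℓpos : ∀ w ∈ Φ, 0 < ℓ ‖w‖ := by
    intro w hw
    have hwr : r₀ < ‖w‖ := hΦr₀ w hw
    have h0 : 0 < ‖w‖ := hr₀.trans hwr
    exact lt_of_lt_of_le (by positivity) (hℓlb _ hwr)
  -- the denominator function
  set Df : Plane → ℝ := fun w => γ₀ / ℓ ‖w‖ + Qf ‖w‖ with hDf
  have hQf0 : ∀ t : ℝ, 0 ≤ t → 0 ≤ Qf t := by
    intro t ht
    have t1 : 0 ≤ (C/C')*(ρ/(β-1))*t :=
      mul_nonneg (mul_nonneg (by positivity) (div_nonneg hρ e3.le)) ht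
    have t2 : 0 ≤ (C/C')*(2*ν/(β-2))*t^2 :=
      mul_nonneg (mul_nonneg (by positivity) (div_nonneg (by linarith) e4.le)) (sq_nonneg t)
    simp only [hQf]
    linarith
  have hDpos : ∀ w ∈ Φ, 0 < Df w := by
    intro w hw
    show 0 < γ₀ / ℓ ‖w‖ + Qf ‖w‖
    exact add_pos_of_pos_of_nonneg (div_pos hγ₀ (hℓpos w hw)) (hQf0 _ (norm_nonneg w))
  have hDmono : ∀ v w : Plane, v ∈ Φ → w ∈ Φ → ‖v‖ ≤ ‖w‖ → Df v ≤ Df w := by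
    intro v w hv hw hvw
    have hlv := hℓpos v hv
    have hlw := hℓpos w hw
    have hml : ℓ ‖w‖ ≤ ℓ ‖v‖ := hℓanti (norm_nonneg v) (norm_nonneg w) hvw
    have h1 : γ₀ / ℓ ‖v‖ ≤ γ₀ / ℓ ‖w‖ := div_le_div_of_nonneg_left hγ₀.le hlw hml
    have h2 : Qf ‖v‖ ≤ Qf ‖w‖ := by
      simp only [hQf]
      have c1 : 0 ≤ (C/C')*(ρ/(β-1)) := mul_nonneg (by positivity) (div_nonneg hρ e3.le)
      have c2 : 0 ≤ (C/C')*(2*ν/(β-2)) := mul_nonneg (by positivity) (div_nonneg (by linarith) e4.le)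
      have hn : 0 ≤ ‖v‖ := norm_nonneg v
      have hsq : ‖v‖^2 ≤ ‖w‖^2 := pow_le_pow_left₀ hn hvw 2
      have m1 := mul_le_mul_of_nonneg_left hvw c1
      have m2 := mul_le_mul_of_nonneg_left hsq c2
      linarith
    show γ₀ / ℓ ‖v‖ + Qf ‖v‖ ≤ γ₀ / ℓ ‖w‖ + Qf ‖w‖
    exact add_le_add h1 h2
  -- eta at ‖x‖ equals (Df x)⁻¹
  have hetaeq : eta ℓ γ₀ σ ((C / C') * (ρ / (β - 1))) ((C / C') * (2 * ν / (β - 2))) ‖x‖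
      = (Df x)⁻¹ := by
    simp only [eta, hDf, hQf]
    ring_nf
  have hDx : 0 < Df x := hDpos x hx
  have hetapos : 0 < eta ℓ γ₀ σ ((C / C') * (ρ / (β - 1))) ((C / C') * (2 * ν / (β - 2))) ‖x‖ := by
    rw [hetaeq]; exact inv_pos.2 hDx
  set L : ℝ := Real.logb 2
    (1 + eta ℓ γ₀ σ ((C / C') * (ρ / (β - 1))) ((C / C') * (2 * ν / (β - 2))) ‖x‖) with hL
  have hLpos : 0 < L := Real.logb_pos one_lt_two (by linarith)
  -- SrINR lower bound
  have hSrINR : ∀ v ∈ Φ, ‖v‖ ≤ ‖x‖ → (Df x)⁻¹ ≤ SrINR ℓ γ₀ Φ v := by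
    intro v hv hvx
    have hlv := hℓpos v hv
    have hI0 : 0 ≤ tailInterference ℓ Φ ‖v‖ := tsum_nonneg (fun w => hℓ0 _)
    have hIb : tailInterference ℓ Φ ‖v‖ ≤ ℓ ‖v‖ * Qf ‖v‖ :=
      core Φ σ ρ ν hσ hρ hν hloc hreg ℓ hℓ0 hℓanti C C' r₀ β hC' hCC' hr₀ hβ hℓlb hℓub
        ‖v‖ (hΦr₀ v hv)
    have hDv : 0 < Df v := hDpos v hv
    have hden : ℓ ‖v‖ * Qf ‖v‖ + γ₀ = ℓ ‖v‖ * Df v := by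
      simp only [hDf]
      field_simp
      ring
    have h1 : SrINR ℓ γ₀ Φ v ≥ ℓ ‖v‖ / (ℓ ‖v‖ * Df v) := by
      rw [SrINR, ← hden]
      exact div_le_div_of_nonneg_left hlv.le (by linarith) (by linarith)
    have h2 : ℓ ‖v‖ / (ℓ ‖v‖ * Df v) = (Df v)⁻¹ := by
      rw [div_mul_eq_div_div, div_self hlv.ne', one_div]
    have h3 : (Df x)⁻¹ ≤ (Df v)⁻¹ := inv_anti₀ hDv (hDmono v x hv hx hvx)
    calc (Df x)⁻¹ ≤ (Df v)⁻¹ := h3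
      _ = ℓ ‖v‖ / (ℓ ‖v‖ * Df v) := h2.symm
      _ ≤ SrINR ℓ γ₀ Φ v := h1
  -- rate lower bound
  have hrate : ∀ w ∈ Φ, ‖w‖ ≤ ‖x‖ → L ≤ rate ℓ γ₀ Φ w := by
    intro w hw hwx
    unfold rate
    apply le_csInf ⟨_, Set.mem_image_of_mem _ (show w ∈ {v ∈ Φ | ‖v‖ ≤ ‖w‖} from ⟨hw, le_refl _⟩)⟩
    rintro b ⟨v, ⟨hv, hvw⟩, rfl⟩
    have hvx : ‖v‖ ≤ ‖x‖ := hvw.trans hwx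
    have hS := hSrINR v hv hvx
    rw [hL, hetaeq]
    exact (Real.logb_le_logb one_lt_two (by linarith [inv_pos.2 hDx]) (by nlinarith [inv_pos.2 hDx])).2 (by linarith)
  -- conclude
  apply Real.sSup_le
  · rintro d ⟨w, ⟨hw, hwx⟩, rfl⟩
    have hr := hrate w hw hwx
    show m / rate ℓ γ₀ Φ w ≤ m / L
    exact div_le_div_of_nonneg_left hm.le hLpos hr
  · exact div_nonneg hm.le hLpos.le
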